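/- Let K be a field, d ≥ 1, and let E be the exterior algebra of the (d+1)-dimensional K-vector space with basis y_0, y_1, …, y_d. Let B be the 2d×d matrix over E with entries B_{k,l} = y_{k−l} for 1 ≤ k ≤ 2d and 1 ≤ l ≤ d, where y_m := 0 whenever m < 0 or m > d. Let A be the d×d matrix over E with entries A_{l,j} = Σ y_p ∧ y_q, the sum over all pairs (p,q) with 0 ≤ p < q ≤ d, p < min(l,j) and p + q = l + j − 1, for 1 ≤ l, j ≤ d. Then the matrix product B·A (computed in the noncommutative ring E) is the zero 2d×d matrix. -/
import Mathlib


/-- The generator `y_m` of the exterior algebra `E = ∧(K^{d+1})` on the basis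
`y_0, …, y_d`, extended by `y_m := 0` for `m > d` (and for out-of-range indices). -/
noncomputable def extGen (K : Type*) [Field K] (d m : ℕ) :
    ExteriorAlgebra K (Fin (d + 1) → K) :=
  if h : m ≤ d then
    ExteriorAlgebra.ι K (Pi.single (⟨m, by omega⟩ : Fin (d + 1)) (1 : K))
  else 0

/-- The `2d × d` Sylvester-type matrix `B` over `E` with `B_{k,l} = y_{k−l}`
(1-indexed; `y_m = 0` for `m < 0` or `m > d`). -/
noncomputable def sylvesterExt (K : Type*) [Field K] (d : ℕ) :
    Matrix (Fin (2 * d)) (Fin d) (ExteriorAlgebra K (Fin (d + 1) → K)) :=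
  Matrix.of fun k l =>
    if l.val ≤ k.val then extGen K d (k.val - l.val) else 0

/-- The `d × d` Bézout-type matrix `A` over `E` with entries
`A_{l,j} = Σ y_p ∧ y_q` over `0 ≤ p < q ≤ d`, `p < min(l,j)`, `p + q = l + j − 1`
(1-indexed; here realized with 0-based `Fin d` indices). -/
noncomputable def bezoutExt (K : Type*) [Field K] (d : ℕ) :
    Matrix (Fin d) (Fin d) (ExteriorAlgebra K (Fin (d + 1) → K)) :=
  Matrix.of fun l j =>
    ∑ p ∈ Finset.range (d + 1), ∑ q ∈ Finset.range (d + 1),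
      if p < q ∧ p ≤ min l.val j.val ∧ p + q = l.val + j.val + 1 then
        extGen K d p * extGen K d q
      else 0

section
variable {K : Type*} [Field K] {d : ℕ}


lemma extGen_add_swap (a b : ℕ) :
    extGen K d a * extGen K d b + extGen K d b * extGen K d a = 0 := by
  unfold extGen
  split_ifs <;> simp [ExteriorAlgebra.ι_add_mul_swap]

lemma extGen_sq (a : ℕ) : extGen K d a * extGen K d a = 0 := by
  unfold extGen
  split_ifs <;> simp [ExteriorAlgebra.ι_sq_zero]

lemma extGen_swap12 (a b c : ℕ) :
    extGen K d a * (extGen K d b * extGen K d c)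
      + extGen K d b * (extGen K d a * extGen K d c) = 0 := by
  rw [← mul_assoc, ← mul_assoc, ← add_mul, extGen_add_swap, zero_mul]

lemma extGen_swap23 (a b c : ℕ) :
    extGen K d a * (extGen K d b * extGen K d c)
      + extGen K d a * (extGen K d c * extGen K d b) = 0 := by
  rw [← mul_add, extGen_add_swap, mul_zero]

lemma extGen_aab (a b : ℕ) :
    extGen K d a * (extGen K d a * extGen K d b) = 0 := by
  rw [← mul_assoc, extGen_sq, zero_mul]

lemma extGen_aba (a b : ℕ) :
    extGen K d a * (extGen K d b * extGen K d a) = 0 := by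
  have h := extGen_swap12 (K := K) (d := d) a b a
  rwa [extGen_sq, mul_zero, add_zero] at h

lemma extGen_swap13 (a b c : ℕ) :
    extGen K d a * (extGen K d b * extGen K d c)
      + extGen K d c * (extGen K d b * extGen K d a) = 0 := by
  have h1 := extGen_swap12 (K := K) (d := d) c b a
  have h2 := extGen_swap23 (K := K) (d := d) b c a
  have h3 := extGen_swap12 (K := K) (d := d) b a c
  -- c(ba) = -(b(ca)) = b(ac) = -(a(bc))
  have e1 : extGen K d c * (extGen K d b * extGen K d a)
      = -(extGen K d b * (extGen K d c * extGen K d a)) :=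
    eq_neg_of_add_eq_zero_left (by linear_combination (norm := abel) h1)
  have e2 : extGen K d b * (extGen K d c * extGen K d a)
      = -(extGen K d b * (extGen K d a * extGen K d c)) :=
    eq_neg_of_add_eq_zero_left h2
  have e3 : extGen K d b * (extGen K d a * extGen K d c)
      = -(extGen K d a * (extGen K d b * extGen K d c)) :=
    eq_neg_of_add_eq_zero_left (by linear_combination (norm := abel) h3)
  rw [e1, e2, e3]
  abel

lemma extGen_of_gt {a : ℕ} (h : d < a) : extGen K d a = 0 := by
  rw [extGen, dif_neg (by omega)]

end

set_option maxHeartbeats 1600000 in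
/-- **The key cancellation in the Tate resolution of `O_{P¹}(−1)`:**
the product `B·A` of the Sylvester-type matrix with the Bézout-type matrix over the
exterior algebra `E = ∧(K^{d+1})` is the zero `2d × d` matrix. -/
theorem sylvesterExt_mul_bezoutExt_eq_zero (K : Type*) [Field K] (d : ℕ) (hd : 1 ≤ d) :
    sylvesterExt K d * bezoutExt K d = 0 := by
  ext k j
  rw [Matrix.mul_apply, Matrix.zero_apply]
  simp only [sylvesterExt, bezoutExt, Matrix.of_apply, Finset.mul_sum,
    ite_mul, zero_mul, mul_ite, mul_zero, ← ite_and]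
  rw [Fin.sum_univ_eq_sum_range (fun l => ∑ p ∈ Finset.range (d+1), ∑ q ∈ Finset.range (d+1),
    if (p < q ∧ p ≤ min l (j:ℕ) ∧ p + q = l + (j:ℕ) + 1) ∧ l ≤ (k:ℕ) then
      extGen K d ((k:ℕ) - l) * (extGen K d p * extGen K d q) else 0)]
  have hrw : ∑ x ∈ (Finset.range d ×ˢ (Finset.range (d+1) ×ˢ Finset.range (d+1))),
      (if (x.2.1 < x.2.2 ∧ x.2.1 ≤ min x.1 (j:ℕ) ∧ x.2.1 + x.2.2 = x.1 + (j:ℕ) + 1) ∧ x.1 ≤ (k:ℕ) then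
        extGen K d ((k:ℕ) - x.1) * (extGen K d x.2.1 * extGen K d x.2.2) else 0)
      = ∑ i ∈ Finset.range d, ∑ p ∈ Finset.range (d+1), ∑ q ∈ Finset.range (d+1),
        (if (p < q ∧ p ≤ min i (j:ℕ) ∧ p + q = i + (j:ℕ) + 1) ∧ i ≤ (k:ℕ) then
          extGen K d ((k:ℕ) - i) * (extGen K d p * extGen K d q) else 0) := by
    rw [Finset.sum_product]
    exact Finset.sum_congr rfl fun i _ => Finset.sum_product _ _ _
  rw [← hrw, ← Finset.sum_filter]
  have hk : (k:ℕ) < 2 * d := k.isLt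
  have hj : (j:ℕ) < d := j.isLt
  refine Finset.sum_involution
    (fun x _ =>
      if (k:ℕ) - x.1 = x.2.1 ∨ (k:ℕ) - x.1 = x.2.2 ∨ d < (k:ℕ) - x.1 then x
      else if (k:ℕ) - x.1 < x.2.1 then ((k:ℕ) - x.2.1, (k:ℕ) - x.1, x.2.2)
      else if x.2.2 < (k:ℕ) - x.1 then ((k:ℕ) - x.2.2, x.2.1, (k:ℕ) - x.1)
      else if (k:ℕ) - x.1 ≤ (j:ℕ) then ((k:ℕ) - x.2.1, (k:ℕ) - x.1, x.2.2)
      else ((k:ℕ) - x.2.2, x.2.1, (k:ℕ) - x.1))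
    ?_ ?_ ?_ ?_
  · rintro ⟨l, p, q⟩ hx
    simp only [Finset.mem_filter, Finset.mem_product, Finset.mem_range] at hx
    obtain ⟨⟨hl, hp, hq⟩, ⟨hpq, hpmin, hsum⟩, hlk⟩ := hx
    obtain ⟨hpl, hpj⟩ := le_inf_iff.mp hpmin
    dsimp only
    split_ifs with h1 h2 h3 h4 <;> dsimp only
    · rcases h1 with h1 | h1 | h1
      · rw [show (k:ℕ) - l = p from h1, extGen_aab, zero_add]
      · rw [show (k:ℕ) - l = q from h1, extGen_aba, zero_add]
      · rw [extGen_of_gt h1, zero_mul, zero_add]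
    · rw [show (k:ℕ) - ((k:ℕ) - p) = p by omega]
      exact extGen_swap12 _ _ _
    · rw [show (k:ℕ) - ((k:ℕ) - q) = q by omega]
      exact extGen_swap13 _ _ _
    · rw [show (k:ℕ) - ((k:ℕ) - p) = p by omega]
      exact extGen_swap12 _ _ _
    · rw [show (k:ℕ) - ((k:ℕ) - q) = q by omega]
      exact extGen_swap13 _ _ _
  · rintro ⟨l, p, q⟩ hx hf
    simp only [Finset.mem_filter, Finset.mem_product, Finset.mem_range] at hx
    obtain ⟨⟨hl, hp, hq⟩, ⟨hpq, hpmin, hsum⟩, hlk⟩ := hx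
    obtain ⟨hpl, hpj⟩ := le_inf_iff.mp hpmin
    dsimp only
    split_ifs with h1 h2 h3 h4
    · exfalso
      apply hf
      rcases h1 with h1 | h1 | h1
      · rw [show (k:ℕ) - l = p from h1]; exact extGen_aab _ _
      · rw [show (k:ℕ) - l = q from h1]; exact extGen_aba _ _
      · rw [extGen_of_gt h1, zero_mul]
    · intro heq; injection heq with e1 e2; injection e2 with e2 e3; omega
    · intro heq; injection heq with e1 e2; injection e2 with e2 e3; omega
    · intro heq; injection heq with e1 e2; injection e2 with e2 e3; omega
    · intro heq; injection heq with e1 e2; injection e2 with e2 e3; omega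
  · rintro ⟨l, p, q⟩ hx
    have hx' := hx
    simp only [Finset.mem_filter, Finset.mem_product, Finset.mem_range] at hx'
    obtain ⟨⟨hl, hp, hq⟩, ⟨hpq, hpmin, hsum⟩, hlk⟩ := hx'
    obtain ⟨hpl, hpj⟩ := le_inf_iff.mp hpmin
    dsimp only
    split_ifs with h1 h2 h3 h4
    · exact hx
    all_goals simp only [Finset.mem_filter, Finset.mem_product, Finset.mem_range]
    all_goals omega
  · rintro ⟨l, p, q⟩ hx
    simp only [Finset.mem_filter, Finset.mem_product, Finset.mem_range] at hx
    obtain ⟨⟨hl, hp, hq⟩, ⟨hpq, hpmin, hsum⟩, hlk⟩ := hx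
    obtain ⟨hpl, hpj⟩ := le_inf_iff.mp hpmin
    dsimp only
    split_ifs <;> simp only [Prod.mk.injEq, not_or, not_lt, not_le, and_true, true_and] at * <;> omega
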